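/- Let N ≥ 2, let t_0, …, t_{N−1} be the zeros of the N-th Chebyshev polynomial of the first kind, t_k = cos((2k+1)π/(2N)), and let V ∈ ℝ^{N×N} be the matrix with entries V_{i,j} = T_{i−1}(t_{j−1}) för 1 ≤ i,j ≤ N, where T_m is the m-th Chebyshev polynomial of the first kind. Then V is invertible and its spectral-norm condition number equals √2: ‖V‖ · ‖V^{−1}‖ = √2. -/

import Mathlib

open scoped Matrix.Norms.L2Operator
open Real Finset Matrix

set_option maxHeartbeats 1000000 in
/-- Discrete orthogonality trig sum. -/
lemma cheb_cos_sum_zero (N : ℕ) (hN : 0 < N) (m : ℤ) (hm0 : m ≠ 0) (hm : |m| < 2 * N) :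
    ∑ k ∈ Finset.range N, Real.cos ((m : ℝ) * ((2 * k + 1) * π / (2 * N))) = 0 := by
  set c : ℝ := π / (2 * N) with hc
  have hNpos : (0:ℝ) < N := by exact_mod_cast hN
  have hmabs : |(m:ℝ)| < 2 * N := by
    have := hm
    calc |(m:ℝ)| = ((|m| : ℤ) : ℝ) := by push_cast; rfl
    _ < ((2 * N : ℤ) : ℝ) := by exact_mod_cast hm
    _ = 2 * N := by push_cast; ring
  have hcpos : 0 < c := by positivity
  have hsin : Real.sin ((m:ℝ) * c) ≠ 0 := by
    have h1 : -π < (m:ℝ) * c := by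
      have : |(m:ℝ) * c| < π := by
        rw [abs_mul, abs_of_pos hcpos, hc]
        calc |(m:ℝ)| * (π / (2 * N)) < (2 * N) * (π / (2 * N)) := by
              apply mul_lt_mul_of_pos_right hmabs; positivity
        _ = π := by field_simp
      linarith [abs_lt.mp this]
    have h2 : (m:ℝ) * c < π := by
      have : |(m:ℝ) * c| < π := by
        rw [abs_mul, abs_of_pos hcpos, hc]
        calc |(m:ℝ)| * (π / (2 * N)) < (2 * N) * (π / (2 * N)) := by
              apply mul_lt_mul_of_pos_right hmabs; positivity
        _ = π := by field_simp
      linarith [abs_lt.mp this]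
    rw [Ne, Real.sin_eq_zero_iff_of_lt_of_lt h1 h2]
    intro h
    rcases mul_eq_zero.mp h with h | h
    · exact hm0 (by exact_mod_cast h)
    · exact absurd h (ne_of_gt hcpos)
  set F : ℕ → ℝ := fun k => Real.sin ((m:ℝ) * 2 * k * c) with hF
  have key : ∀ k : ℕ, 2 * Real.sin ((m:ℝ) * c) * Real.cos ((m:ℝ) * ((2 * k + 1) * c))
      = F (k+1) - F k := by
    intro k
    rw [hF]
    simp only
    rw [Real.sin_sub_sin]
    have e1 : ((m:ℝ) * 2 * (↑(k+1)) * c - (m:ℝ) * 2 * (k:ℝ) * c) / 2 = (m:ℝ) * c := by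
      push_cast; ring
    have e2 : ((m:ℝ) * 2 * (↑(k+1)) * c + (m:ℝ) * 2 * (k:ℝ) * c) / 2
        = (m:ℝ) * ((2 * k + 1) * c) := by push_cast; ring
    rw [e1, e2]
  have hsum : 2 * Real.sin ((m:ℝ) * c) *
      (∑ k ∈ Finset.range N, Real.cos ((m:ℝ) * ((2 * k + 1) * c))) = 0 := by
    rw [Finset.mul_sum, Finset.sum_congr rfl fun k _ => key k, Finset.sum_range_sub F N]
    have hend : F N = 0 := by
      rw [hF]
      simp only
      have : (m:ℝ) * 2 * N * c = (m:ℝ) * π := by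
        rw [hc]; field_simp
      rw [this]; exact Real.sin_int_mul_pi m
    have h0 : F 0 = 0 := by rw [hF]; simp
    rw [hend, h0, sub_zero]
  have hS : (∑ k ∈ Finset.range N, Real.cos ((m:ℝ) * ((2 * k + 1) * c))) = 0 := by
    rcases mul_eq_zero.mp hsum with h | h
    · exact absurd ((mul_eq_zero.mp h).resolve_left (by norm_num)) hsin
    · exact h
  calc ∑ k ∈ Finset.range N, Real.cos ((m : ℝ) * ((2 * k + 1) * π / (2 * N)))
      = ∑ k ∈ Finset.range N, Real.cos ((m:ℝ) * ((2 * k + 1) * c)) :=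
        Finset.sum_congr rfl fun k _ => by rw [hc]; ring
  _ = 0 := hS

lemma l2_opNorm_diagonal_eq {n : ℕ} (d : Fin n → ℝ) (M : ℝ)
    (hb : ∀ i, |d i| ≤ M) (i0 : Fin n) (h0 : |d i0| = M) :
    ‖Matrix.diagonal d‖ = M := by
  have hM0 : 0 ≤ M := h0 ▸ abs_nonneg _
  apply le_antisymm
  · rw [Matrix.l2_opNorm_def]
    refine ContinuousLinearMap.opNorm_le_bound _ hM0 fun x => ?_
    have happ : ((Matrix.toEuclideanLin.trans LinearMap.toContinuousLinearMap)
        (Matrix.diagonal d)) x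
        = (WithLp.equiv 2 (Fin n → ℝ)).symm ((Matrix.diagonal d) *ᵥ (WithLp.equiv 2 _) x) := rfl
    rw [happ]
    rw [EuclideanSpace.norm_eq, EuclideanSpace.norm_eq]
    have hle : ∑ i, ‖((WithLp.equiv 2 (Fin n → ℝ)).symm
        ((Matrix.diagonal d) *ᵥ (WithLp.equiv 2 _) x)) i‖ ^ 2 ≤ M ^ 2 * ∑ i, ‖x i‖ ^ 2 := by
      rw [Finset.mul_sum]
      apply Finset.sum_le_sum
      intro i _
      simp only [WithLp.equiv_symm_apply, WithLp.equiv_apply, WithLp.ofLp_toLp, Matrix.mulVec_diagonal]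
      rw [Real.norm_eq_abs, Real.norm_eq_abs, abs_mul, mul_pow]
      have := hb i
      have h1 : |d i| ^ 2 ≤ M ^ 2 := by nlinarith [abs_nonneg (d i)]
      have h2 : (0:ℝ) ≤ |x i| ^ 2 := by positivity
      nlinarith [abs_nonneg (x i)]
    calc √(∑ i, ‖((WithLp.equiv 2 (Fin n → ℝ)).symm
            ((Matrix.diagonal d) *ᵥ (WithLp.equiv 2 _) x)) i‖ ^ 2)
        ≤ √(M ^ 2 * ∑ i, ‖x i‖ ^ 2) := Real.sqrt_le_sqrt hle
      _ = M * √(∑ i, ‖x i‖ ^ 2) := by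
          rw [Real.sqrt_mul (by positivity), Real.sqrt_sq hM0]
  · have h := Matrix.l2_opNorm_mulVec (Matrix.diagonal d) (EuclideanSpace.single i0 1)
    have hx : ((Matrix.diagonal d) *ᵥ (EuclideanSpace.single i0 (1:ℝ)) : Fin n → ℝ)
        = (EuclideanSpace.single i0 (d i0) : EuclideanSpace ℝ (Fin n)) := by
      funext i
      simp only [Matrix.mulVec_diagonal, EuclideanSpace.single_apply]
      by_cases hi : i = i0 <;> simp [hi]
    rw [hx] at h
    have h1 : ‖(EuclideanSpace.equiv (Fin n) ℝ).symm
        ((EuclideanSpace.single i0 (d i0) : EuclideanSpace ℝ (Fin n)) : Fin n → ℝ)‖ = M := by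
      have : (EuclideanSpace.equiv (Fin n) ℝ).symm
          ((EuclideanSpace.single i0 (d i0) : EuclideanSpace ℝ (Fin n)) : Fin n → ℝ)
          = EuclideanSpace.single i0 (d i0) := rfl
      rw [this, EuclideanSpace.norm_single, Real.norm_eq_abs, h0]
    rw [h1, EuclideanSpace.norm_single] at h
    simpa using h

/-- The Chebyshev Vandermonde-like matrix `V` with entries `V_{i,j} = T_{i-1}(t_{j-1})`
(1-based indices), where `t_k = cos((2k+1)π/(2N))` are the zeros of the `N`-th Chebyshev
polynomial of the first kind, is invertible and its spectral-norm condition number is `√2`. -/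
theorem chebyshev_vandermonde_condition_number (N : ℕ) (hN : 2 ≤ N)
    (V : Matrix (Fin N) (Fin N) ℝ)
    (hV : ∀ i j : Fin N, V i j = (Polynomial.Chebyshev.T ℝ ((i : ℕ) : ℤ)).eval
      (Real.cos ((2 * (j : ℕ) + 1) * Real.pi / (2 * N)))) :
    IsUnit V ∧ ‖V‖ * ‖V⁻¹‖ = Real.sqrt 2 := by
  have hNpos : 0 < N := by omega
  have hNR : (0:ℝ) < N := by exact_mod_cast hNpos
  -- S m : the discrete cosine sum
  set S : ℤ → ℝ := fun m => ∑ k ∈ Finset.range N,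
    Real.cos ((m : ℝ) * ((2 * k + 1) * π / (2 * N))) with hSdef
  have hS0 : S 0 = N := by
    simp [hSdef]
  have hSne : ∀ m : ℤ, m ≠ 0 → |m| < 2 * N → S m = 0 := fun m h1 h2 =>
    cheb_cos_sum_zero N hNpos m h1 h2
  -- entries of V
  have hVc : ∀ i j : Fin N, V i j =
      Real.cos (((i:ℕ):ℝ) * ((2 * (j:ℕ) + 1) * π / (2 * N))) := by
    intro i j
    rw [hV i j, Polynomial.Chebyshev.T_real_cos]
    push_cast
    ring_nf
  -- the diagonal matrix
  set d : Fin N → ℝ := fun i => if (i:ℕ) = 0 then (N:ℝ) else N / 2 with hd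
  have hD : V * Vᵀ = Matrix.diagonal d := by
    ext i j
    rw [Matrix.mul_apply]
    have hterm : ∀ k : Fin N, V i k * Vᵀ k j =
        (Real.cos (((((i:ℕ):ℤ) + ((j:ℕ):ℤ)):ℝ) * ((2 * (k:ℕ) + 1) * π / (2 * N)))
          + Real.cos (((((i:ℕ):ℤ) - ((j:ℕ):ℤ)):ℝ) * ((2 * (k:ℕ) + 1) * π / (2 * N)))) / 2 := by
      intro k
      rw [Matrix.transpose_apply, hVc i k, hVc j k]
      set A := (2 * (k:ℕ) + 1) * π / (2 * N)
      have : ∀ a b : ℝ, Real.cos a * Real.cos b = (Real.cos (a+b) + Real.cos (a-b))/2 := by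
        intro a b; rw [Real.cos_add, Real.cos_sub]; ring
      rw [this]
      push_cast
      ring_nf
    rw [Finset.sum_congr rfl fun k _ => hterm k]
    have hsplit : ∑ k : Fin N,
        (Real.cos (((((i:ℕ):ℤ) + ((j:ℕ):ℤ)):ℝ) * ((2 * (k:ℕ) + 1) * π / (2 * N)))
          + Real.cos (((((i:ℕ):ℤ) - ((j:ℕ):ℤ)):ℝ) * ((2 * (k:ℕ) + 1) * π / (2 * N)))) / 2
        = (S (((i:ℕ):ℤ) + ((j:ℕ):ℤ)) + S (((i:ℕ):ℤ) - ((j:ℕ):ℤ))) / 2 := by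
      rw [hSdef]
      simp only
      rw [← Finset.sum_add_distrib, ← Finset.sum_div]
      push_cast
      congr 1
      exact Fin.sum_univ_eq_sum_range (fun k : ℕ =>
        Real.cos ((((i:ℕ):ℝ) + ((j:ℕ):ℝ)) * ((2 * k + 1) * π / (2 * N)))
          + Real.cos ((((i:ℕ):ℝ) - ((j:ℕ):ℝ)) * ((2 * k + 1) * π / (2 * N)))) N
    rw [hsplit]
    by_cases hij : i = j
    · subst hij
      rw [Matrix.diagonal_apply_eq]
      by_cases hi0 : (i:ℕ) = 0
      · rw [sub_self, hS0, hi0]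
        simp only [hd, hi0, if_pos rfl]
        push_cast [hi0, hS0]
        ring
      · have h2i : S (((i:ℕ):ℤ) + ((i:ℕ):ℤ)) = 0 := by
          apply hSne
          · omega
          · have : (i:ℕ) < N := i.isLt
            rw [abs_of_nonneg (by omega)]
            omega
        rw [h2i, sub_self, hS0]
        simp only [hd, if_neg hi0]
        ring
    · rw [Matrix.diagonal_apply_ne _ hij]
      have hne : (i:ℕ) ≠ (j:ℕ) := fun h => hij (Fin.ext h)
      have h1 : S (((i:ℕ):ℤ) + ((j:ℕ):ℤ)) = 0 := by
        apply hSne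
        · omega
        · have hi := i.isLt; have hj := j.isLt
          rw [abs_of_nonneg (by omega)]; omega
      have h2 : S (((i:ℕ):ℤ) - ((j:ℕ):ℤ)) = 0 := by
        apply hSne
        · omega
        · have hi := i.isLt; have hj := j.isLt
          rw [abs_lt]
          constructor <;> omega
      rw [h1, h2]; norm_num
  have hdne : ∀ i, d i ≠ 0 := by
    intro i
    simp only [hd]
    split_ifs
    · exact ne_of_gt hNR
    · exact ne_of_gt (by linarith)
  set e : Fin N → ℝ := fun i => (d i)⁻¹ with he
  have hDE : Matrix.diagonal d * Matrix.diagonal e = 1 := by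
    rw [Matrix.diagonal_mul_diagonal,
      show (fun i => d i * e i) = fun _ : Fin N => (1:ℝ) from
        funext fun i => mul_inv_cancel₀ (hdne i),
      Matrix.diagonal_one]
  have hunit : IsUnit V := by
    rw [Matrix.isUnit_iff_isUnit_det]
    have hdd : V.det * V.det ≠ 0 := by
      have h : V.det * Vᵀ.det = (Matrix.diagonal d).det := by rw [← Matrix.det_mul, hD]
      rw [Matrix.det_transpose] at h
      rw [h, Matrix.det_diagonal]
      exact Finset.prod_ne_zero_iff.mpr fun i _ => hdne i
    exact isUnit_iff_ne_zero.mpr fun h => hdd (by rw [h, mul_zero])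
  refine ⟨hunit, ?_⟩
  have hVinv : V⁻¹ = Vᵀ * Matrix.diagonal e := by
    apply Matrix.inv_eq_right_inv
    rw [← Matrix.mul_assoc, hD, hDE]
  have hnV : ‖V‖ * ‖V‖ = (N:ℝ) := by
    have h1 : ‖Vᵀᴴ * Vᵀ‖ = ‖Vᵀ‖ * ‖Vᵀ‖ := Matrix.l2_opNorm_conjTranspose_mul_self Vᵀ
    have h2 : Vᵀᴴ = V := by
      rw [Matrix.conjTranspose_eq_transpose_of_trivial, Matrix.transpose_transpose]
    have h3 : ‖Vᵀ‖ = ‖V‖ := by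
      rw [← Matrix.conjTranspose_eq_transpose_of_trivial, Matrix.l2_opNorm_conjTranspose]
    rw [h2, hD] at h1
    rw [← h3, ← h1]
    apply l2_opNorm_diagonal_eq d N _ ⟨0, hNpos⟩
    · simp [hd]
    · intro i
      simp only [hd]
      split_ifs
      · rw [abs_of_nonneg (le_of_lt hNR)]
      · rw [abs_of_nonneg (by linarith)]; linarith
  have hInvD : (V⁻¹)ᵀ * V⁻¹ = Matrix.diagonal e := by
    rw [hVinv, Matrix.transpose_mul, Matrix.transpose_transpose, Matrix.diagonal_transpose,
      Matrix.mul_assoc, ← Matrix.mul_assoc V, hD, hDE, Matrix.mul_one]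
  have hnVi : ‖V⁻¹‖ * ‖V⁻¹‖ = 2 / N := by
    have h1 := Matrix.l2_opNorm_conjTranspose_mul_self V⁻¹
    rw [Matrix.conjTranspose_eq_transpose_of_trivial, hInvD] at h1
    rw [← h1]
    apply l2_opNorm_diagonal_eq e (2/N) _ ⟨1, by omega⟩
    · simp only [he, hd]
      rw [if_neg (by norm_num : ¬(((⟨1, by omega⟩ : Fin N) : ℕ) = 0)), inv_div,
        abs_of_nonneg (by positivity)]
    · intro i
      simp only [he, hd]
      split_ifs
      · rw [abs_of_nonneg (by positivity), inv_eq_one_div]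
        have h12 : (2:ℝ)/N - 1/N = 1/N := by ring
        have hpos : (0:ℝ) ≤ 1/(N:ℝ) := by positivity
        linarith
      · rw [inv_div, abs_of_nonneg (by positivity)]
  have hnn : 0 ≤ ‖V‖ * ‖V⁻¹‖ := mul_nonneg (norm_nonneg _) (norm_nonneg _)
  have hprod : (‖V‖ * ‖V⁻¹‖) ^ 2 = 2 := by
    have : (‖V‖ * ‖V⁻¹‖) ^ 2 = (‖V‖ * ‖V‖) * (‖V⁻¹‖ * ‖V⁻¹‖) := by ring
    rw [this, hnV, hnVi]
    field_simp
  rw [show (2:ℝ) = (‖V‖ * ‖V⁻¹‖) ^ 2 from hprod.symm, Real.sqrt_sq hnn]
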